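/- Let B be an N×N complex matrix, β ∈ ℂᴺ, with BB* + ⟨·,β⟩β = I. Fix complex numbers ζ_j with |ζ_j| = 1 such that I - BD(ζ) is invertible, and set A = BD(ζ), p = (I - A)^{-1}β. Then for each j, |p_j|² = 1 + [(I-A)^{-1}A]_{jj} + conj([(I-A)^{-1}A]_{jj}); equivalently |p_j|² = 1 + [(I-A)^{-1}B]_{jj} ζ_j + conj([(I-A)^{-1}B]_{jj} ζ_j). -/

import Mathlib

open Matrix ComplexConjugate

/-- Let `B B* + ⟨·,β⟩β = I`, let `ζ_j` be unimodular with `I - B D(ζ)` invertible, and put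
`A = B D(ζ)`, `p = (I - A)⁻¹ β`.  Then for each `j`,
`|p_j|² = 1 + [(I-A)⁻¹ A]_{jj} + conj([(I-A)⁻¹ A]_{jj})`. -/
theorem isometric_multiplier_modulus_identity
    (N : ℕ) (B : Matrix (Fin N) (Fin N) ℂ) (β : Fin N → ℂ)
    (hB : B * Bᴴ + Matrix.vecMulVec β (star β) = 1)
    (ζ : Fin N → ℂ) (hζ : ∀ j, ‖ζ j‖ = 1)
    (hinv : IsUnit ((1 : Matrix (Fin N) (Fin N) ℂ) - B * Matrix.diagonal ζ)) :
    ∀ j : Fin N,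
      ((‖(((1 : Matrix (Fin N) (Fin N) ℂ) - B * Matrix.diagonal ζ)⁻¹ *ᵥ β) j‖ ^ 2 : ℝ) : ℂ)
        = 1 + (((1 : Matrix (Fin N) (Fin N) ℂ) - B * Matrix.diagonal ζ)⁻¹ *
                (B * Matrix.diagonal ζ)) j j
            + conj ((((1 : Matrix (Fin N) (Fin N) ℂ) - B * Matrix.diagonal ζ)⁻¹ *
                (B * Matrix.diagonal ζ)) j j) := by
  intro j
  set A := B * Matrix.diagonal ζ with hA
  set M := (1 : Matrix (Fin N) (Fin N) ℂ) - A with hM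
  -- D(ζ) is unitary
  have hDD : Matrix.diagonal ζ * (Matrix.diagonal ζ)ᴴ = 1 := by
    have h1 : (fun i => ζ i * star ζ i) = fun _ => (1 : ℂ) := by
      funext i
      simp only [Pi.star_apply, Complex.star_def]
      rw [Complex.mul_conj, Complex.normSq_eq_norm_sq, hζ i]
      norm_num
    rw [Matrix.diagonal_conjTranspose, Matrix.diagonal_mul_diagonal, h1, Matrix.diagonal_one]
  have hAA : A * Aᴴ = B * Bᴴ := by
    rw [hA, Matrix.conjTranspose_mul, Matrix.mul_assoc,
      ← Matrix.mul_assoc (Matrix.diagonal ζ), hDD, Matrix.one_mul]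
  have hββ : Matrix.vecMulVec β (star β) = 1 - A * Aᴴ := by
    rw [hAA]; exact eq_sub_of_add_eq' hB
  have hdet : IsUnit M.det := (Matrix.isUnit_iff_isUnit_det _).mp hinv
  have hdetH : IsUnit Mᴴ.det := by
    rw [Matrix.det_conjTranspose]; exact hdet.star
  have hMl : M⁻¹ * M = 1 := Matrix.nonsing_inv_mul M hdet
  have hMr : Mᴴ * (Mᴴ)⁻¹ = 1 := Matrix.mul_nonsing_inv Mᴴ hdetH
  have hct : (M⁻¹)ᴴ = (Mᴴ)⁻¹ := Matrix.conjTranspose_nonsing_inv M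
  -- key algebraic identity
  have hsplit : (1 : Matrix (Fin N) (Fin N) ℂ) - A * Aᴴ
      = M * Mᴴ + M * Aᴴ + A * Mᴴ := by
    rw [hM]
    simp only [Matrix.conjTranspose_sub, Matrix.conjTranspose_one]
    noncomm_ring
  have key : M⁻¹ * (1 - A * Aᴴ) * (M⁻¹)ᴴ = 1 + M⁻¹ * A + (M⁻¹ * A)ᴴ := by
    have hcm : (M⁻¹ * A)ᴴ = Aᴴ * (Mᴴ)⁻¹ := by rw [Matrix.conjTranspose_mul, hct]
    have e : M⁻¹ * (M * Mᴴ + M * Aᴴ + A * Mᴴ) * (Mᴴ)⁻¹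
        = (M⁻¹ * M) * (Mᴴ * (Mᴴ)⁻¹) + (M⁻¹ * M) * (Aᴴ * (Mᴴ)⁻¹)
          + (M⁻¹ * A) * (Mᴴ * (Mᴴ)⁻¹) := by noncomm_ring
    rw [hsplit, hct, hcm, e, hMl, hMr]
    simp only [Matrix.one_mul, Matrix.mul_one]
    abel
  -- pointwise factorization
  have factor : (M⁻¹ * Matrix.vecMulVec β (star β) * (M⁻¹)ᴴ) j j
      = (M⁻¹ *ᵥ β) j * conj ((M⁻¹ *ᵥ β) j) := by
    simp only [Matrix.mul_apply, Matrix.vecMulVec_apply, Matrix.conjTranspose_apply,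
      Matrix.mulVec, dotProduct, map_sum, Finset.mul_sum, Finset.sum_mul,
      _root_.map_mul, Pi.star_apply, Complex.star_def]
    refine Finset.sum_congr rfl fun l _ => Finset.sum_congr rfl fun k _ => ?_
    ring
  have lhs_eq : ((‖(M⁻¹ *ᵥ β) j‖ ^ 2 : ℝ) : ℂ)
      = (M⁻¹ *ᵥ β) j * conj ((M⁻¹ *ᵥ β) j) := by
    rw [Complex.mul_conj, Complex.normSq_eq_norm_sq]
  rw [lhs_eq, ← factor, hββ, key]
  simp only [Matrix.add_apply, Matrix.one_apply_eq, Matrix.conjTranspose_apply,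
    Complex.star_def]
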